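/- Let X = [[1,2],[0,6]] and Y = [[1,1],[0,6]] in ℤ^{2×2}. Then for every prime p the matrices X and Y are conjugate by an element of GL_2(ℤ_(p)), but X and Y are not conjugate by any element of GL_2(ℤ). -/

import Mathlib

open Matrix

/-- The matrices `X = [[0,2],[-3,0]]` and `Y = [[0,1],[-6,0]]` are conjugate in
`GL₂(ℤ_(p))` for every prime `p` (a matrix over `ℤ_(p)` is a rational matrix all of whose
entries have denominator prime to `p`), but they are not conjugate in `GL₂(ℤ)`. -/
theorem stmt1 :
    (∀ p : ℕ, p.Prime →
      ∃ T : Matrix (Fin 2) (Fin 2) ℚ, IsUnit T ∧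
        (∀ i j, ¬ p ∣ (T i j).den) ∧ (∀ i j, ¬ p ∣ (T⁻¹ i j).den) ∧
        T * (!![1, 2; 0, 6] : Matrix (Fin 2) (Fin 2) ℚ) = !![1, 1; 0, 6] * T) ∧
    ¬ ∃ T : (Matrix (Fin 2) (Fin 2) ℤ)ˣ,
        (T : Matrix (Fin 2) (Fin 2) ℤ) * !![1, 2; 0, 6]
          = !![1, 1; 0, 6] * (T : Matrix (Fin 2) (Fin 2) ℤ) := by
  constructor
  · intro p hp
    have h1 : ¬ (p : ℕ) ∣ 1 := fun h => hp.one_lt.ne' (Nat.dvd_one.mp h)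
    by_cases h2 : p = 2
    · subst h2
      refine ⟨!![-1, 1; 0, 3], ?_, ?_, ?_, ?_⟩
      · rw [Matrix.isUnit_iff_isUnit_det]
        norm_num [Matrix.det_fin_two_of]
      · intro i j; fin_cases i <;> fin_cases j <;> simpa using h1
      · have hinv : (!![-1, 1; 0, 3] : Matrix (Fin 2) (Fin 2) ℚ)⁻¹
            = !![-1, 1/3; 0, 1/3] := by
          apply Matrix.inv_eq_left_inv
          ext i j
          fin_cases i <;> fin_cases j <;>
            norm_num [Matrix.mul_apply, Fin.sum_univ_two]
        rw [hinv]
        have hd3 : ((1:ℚ)/3).den = 3 := by norm_num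
        intro i j; fin_cases i <;> fin_cases j <;> simp [hd3] <;> omega
      · ext i j
        fin_cases i <;> fin_cases j <;>
          norm_num [Matrix.mul_apply, Fin.sum_univ_two]
    · have hodd : ¬ (p : ℕ) ∣ 2 := fun h =>
        h2 ((Nat.prime_dvd_prime_iff_eq hp Nat.prime_two).mp h)
      refine ⟨!![1, 0; 0, 2], ?_, ?_, ?_, ?_⟩
      · rw [Matrix.isUnit_iff_isUnit_det]
        norm_num [Matrix.det_fin_two_of]
      · intro i j; fin_cases i <;> fin_cases j <;> simpa using h1
      · have hinv : (!![1, 0; 0, 2] : Matrix (Fin 2) (Fin 2) ℚ)⁻¹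
            = !![1, 0; 0, 1/2] := by
          apply Matrix.inv_eq_left_inv
          ext i j
          fin_cases i <;> fin_cases j <;>
            norm_num [Matrix.mul_apply, Fin.sum_univ_two]
        rw [hinv]
        have hd2 : ((1:ℚ)/2).den = 2 := by norm_num
        intro i j; fin_cases i <;> fin_cases j <;> simp [hd2, h1, hodd]
      · ext i j
        fin_cases i <;> fin_cases j <;>
          norm_num [Matrix.mul_apply, Fin.sum_univ_two]
  · rintro ⟨T, h⟩
    have e00 := congrFun (congrFun h 0) 0
    have e01 := congrFun (congrFun h 0) 1
    simp [Matrix.mul_apply, Fin.sum_univ_two] at e00 e01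
    have hdet : IsUnit ((T : Matrix (Fin 2) (Fin 2) ℤ)).det :=
      (Matrix.isUnit_iff_isUnit_det _).mp T.isUnit
    rw [Matrix.det_fin_two, Int.isUnit_iff] at hdet
    have hc : (T : Matrix (Fin 2) (Fin 2) ℤ) 1 0 = 0 := by omega
    rw [hc, mul_zero, sub_zero] at hdet
    have ha : IsUnit ((T : Matrix (Fin 2) (Fin 2) ℤ) 0 0) := by
      rcases hdet with hd | hd
      · exact IsUnit.of_mul_eq_one _ hd
      · exact IsUnit.of_mul_eq_one (-((T : Matrix (Fin 2) (Fin 2) ℤ) 1 1))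
          (by linear_combination -hd)
    have hb : IsUnit ((T : Matrix (Fin 2) (Fin 2) ℤ) 1 1) := by
      rcases hdet with hd | hd
      · exact IsUnit.of_mul_eq_one ((T : Matrix (Fin 2) (Fin 2) ℤ) 0 0)
          (by linear_combination hd)
      · exact IsUnit.of_mul_eq_one (-((T : Matrix (Fin 2) (Fin 2) ℤ) 0 0))
          (by linear_combination -hd)
    rw [Int.isUnit_iff] at ha hb
    rcases ha with ha | ha <;> rcases hb with hb | hb <;> omega
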